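/- Let Y ∈ ℝⁿ, W₁ ∈ ℝ^{n×q}, W₂ ∈ ℝ^{n×L}, W = [W₁ W₂], with WᵀW, W₁ᵀW₁ and W̃₂ᵀW̃₂ invertible and σ̂²(W) > 0. Let γ̂₂ = (W̃₂ᵀW̃₂)⁻¹W̃₂ᵀỸ. Let n ≥ 1, p ≥ 1, η ≥ 0, K > 0 and m > 0 be such that n⁻¹YᵀY ≤ K, vᵀ(n⁻¹W̃₂ᵀW̃₂)v ≥ (m/L)|v|² for all v ∈ ℝ^L, and n·log(1 + m|γ̂₂|²/(L·K)) > L(log n + 2η log p). Then n·log σ̂²(W) + L(log n + 2η log p) < n·log σ̂²(W₁); that is, the EBIC strictly decreases when the L extra columns W₂ are added to the design matrix (the deterministic core of Theorem 2(i): the EBIC with stopping parameter η does not stop while a sufficiently strong candidate group remains). -/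

import Mathlib

open Matrix

/-- Variance estimate from OLS with design `W`. -/
noncomputable def sigmaHat {n : ℕ} {d : Type*} [Fintype d] [DecidableEq d]
    (Y : Fin n → ℝ) (W : Matrix (Fin n) d ℝ) : ℝ :=
  (1 / (n : ℝ)) * (Y ⬝ᵥ Y - Y ⬝ᵥ ((W * (Wᵀ * W)⁻¹ * Wᵀ) *ᵥ Y))

set_option linter.unusedSectionVars false

lemma dp_self_nonneg {ι : Type*} [Fintype ι] (v : ι → ℝ) : 0 ≤ v ⬝ᵥ v :=
  Finset.sum_nonneg fun i _ => mul_self_nonneg (v i)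

section helpers
variable {n : ℕ} {d : Type*} [Fintype d] [DecidableEq d]
variable (Y : Fin n → ℝ) (W : Matrix (Fin n) d ℝ)

lemma WdotW (u v : d → ℝ) : (W *ᵥ u) ⬝ᵥ (W *ᵥ v) = u ⬝ᵥ ((Wᵀ * W) *ᵥ v) := by
  rw [← mulVec_mulVec, dotProduct_mulVec u Wᵀ, vecMul_transpose]

lemma YdotW (v : d → ℝ) : Y ⬝ᵥ (W *ᵥ v) = (Wᵀ *ᵥ Y) ⬝ᵥ v := by
  rw [dotProduct_mulVec, mulVec_transpose]

lemma hAe (h : IsUnit (Wᵀ * W)) :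
    (Wᵀ * W) *ᵥ ((Wᵀ * W)⁻¹ *ᵥ (Wᵀ *ᵥ Y)) = Wᵀ *ᵥ Y := by
  rw [mulVec_mulVec, Matrix.mul_nonsing_inv _ ((isUnit_iff_isUnit_det _).mp h), one_mulVec]

lemma hPY : (W * (Wᵀ * W)⁻¹ * Wᵀ) *ᵥ Y = W *ᵥ ((Wᵀ * W)⁻¹ *ᵥ (Wᵀ *ᵥ Y)) := by
  rw [mulVec_mulVec, mulVec_mulVec]

lemma eAb (h : IsUnit (Wᵀ * W)) (b : d → ℝ) :
    ((Wᵀ * W)⁻¹ *ᵥ (Wᵀ *ᵥ Y)) ⬝ᵥ ((Wᵀ * W) *ᵥ b) = (Wᵀ *ᵥ Y) ⬝ᵥ b := by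
  rw [dotProduct_mulVec, ← mulVec_transpose, transpose_mul, transpose_transpose, hAe Y W h]

lemma bAe (h : IsUnit (Wᵀ * W)) (b : d → ℝ) :
    b ⬝ᵥ ((Wᵀ * W) *ᵥ ((Wᵀ * W)⁻¹ *ᵥ (Wᵀ *ᵥ Y))) = (Wᵀ *ᵥ Y) ⬝ᵥ b := by
  rw [hAe Y W h, dotProduct_comm]

lemma sse_le (h : IsUnit (Wᵀ * W)) (b : d → ℝ) :
    Y ⬝ᵥ Y - Y ⬝ᵥ ((W * (Wᵀ * W)⁻¹ * Wᵀ) *ᵥ Y)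
      ≤ (Y - W *ᵥ b) ⬝ᵥ (Y - W *ᵥ b) := by
  have key := dp_self_nonneg (W *ᵥ (((Wᵀ * W)⁻¹ *ᵥ (Wᵀ *ᵥ Y)) - b))
  rw [WdotW, mulVec_sub, sub_dotProduct, dotProduct_sub, dotProduct_sub,
    eAb Y W h, eAb Y W h, bAe Y W h] at key
  rw [hPY, YdotW, sub_dotProduct, dotProduct_sub, dotProduct_sub, YdotW,
    dotProduct_comm (W *ᵥ b) Y, YdotW, WdotW]
  linarith [key]

lemma sse_eq (h : IsUnit (Wᵀ * W)) :
    (Y - W *ᵥ ((Wᵀ * W)⁻¹ *ᵥ (Wᵀ *ᵥ Y))) ⬝ᵥ (Y - W *ᵥ ((Wᵀ * W)⁻¹ *ᵥ (Wᵀ *ᵥ Y)))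
      = Y ⬝ᵥ Y - Y ⬝ᵥ ((W * (Wᵀ * W)⁻¹ * Wᵀ) *ᵥ Y) := by
  rw [hPY, sub_dotProduct, dotProduct_sub, dotProduct_sub, YdotW,
    dotProduct_comm (W *ᵥ _) Y, YdotW, WdotW, hAe Y W h,
    dotProduct_comm (Wᵀ *ᵥ Y) ((Wᵀ * W)⁻¹ *ᵥ (Wᵀ *ᵥ Y))]
  ring

lemma proj_nonneg (h : IsUnit (Wᵀ * W)) :
    0 ≤ Y ⬝ᵥ ((W * (Wᵀ * W)⁻¹ * Wᵀ) *ᵥ Y) := by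
  rw [hPY, YdotW]
  have key := dp_self_nonneg (W *ᵥ ((Wᵀ * W)⁻¹ *ᵥ (Wᵀ *ᵥ Y)))
  rw [WdotW, hAe Y W h, dotProduct_comm] at key
  exact key

end helpers


set_option maxHeartbeats 1000000 in
/-- Deterministic core of Theorem 2(i): the EBIC strictly decreases when a
sufficiently strong candidate group of `L` columns is added. -/
theorem stmt14 (n p q L : ℕ) (hn : 1 ≤ n) (hp : 1 ≤ p)
    (η K m : ℝ) (hη : 0 ≤ η) (hK : 0 < K) (hm : 0 < m)
    (Y : Fin n → ℝ)
    (W₁ : Matrix (Fin n) (Fin q) ℝ) (W₂ : Matrix (Fin n) (Fin L) ℝ)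
    (W : Matrix (Fin n) (Fin q ⊕ Fin L) ℝ) (hW : W = fromCols W₁ W₂)
    (hWtW : IsUnit (Wᵀ * W)) (hW1 : IsUnit (W₁ᵀ * W₁))
    (Wt₂ : Matrix (Fin n) (Fin L) ℝ)
    (hWt₂ : Wt₂ = W₂ - W₁ * (W₁ᵀ * W₁)⁻¹ * W₁ᵀ * W₂)
    (hWt₂u : IsUnit (Wt₂ᵀ * Wt₂))
    (hσ : 0 < sigmaHat Y W)
    (Yt : Fin n → ℝ) (hYt : Yt = Y - (W₁ * (W₁ᵀ * W₁)⁻¹ * W₁ᵀ) *ᵥ Y)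
    (γ₂ : Fin L → ℝ) (hγ₂ : γ₂ = (Wt₂ᵀ * Wt₂)⁻¹ *ᵥ (Wt₂ᵀ *ᵥ Yt))
    (hYK : (1 / (n : ℝ)) * (Y ⬝ᵥ Y) ≤ K)
    (hlow : ∀ v : Fin L → ℝ,
      (m / (L : ℝ)) * (v ⬝ᵥ v)
        ≤ v ⬝ᵥ (((1 / (n : ℝ)) • (Wt₂ᵀ * Wt₂)) *ᵥ v))
    (hsignal : (n : ℝ) * Real.log (1 + m * (γ₂ ⬝ᵥ γ₂) / ((L : ℝ) * K))
      > (L : ℝ) * (Real.log n + 2 * η * Real.log p)) :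
    (n : ℝ) * Real.log (sigmaHat Y W)
        + (L : ℝ) * (Real.log n + 2 * η * Real.log p)
      < (n : ℝ) * Real.log (sigmaHat Y W₁) := by
  have hn0 : (0:ℝ) < n := by exact_mod_cast hn
  rcases Nat.eq_zero_or_pos L with hL0 | hLpos
  · subst hL0
    norm_num [dotProduct] at hsignal
  have hL0 : (0:ℝ) < L := by exact_mod_cast hLpos
  -- basic abbreviations
  set g : ℝ := γ₂ ⬝ᵥ γ₂ with hg
  set t : ℝ := γ₂ ⬝ᵥ ((Wt₂ᵀ * Wt₂) *ᵥ γ₂) with ht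
  set s : ℝ := sigmaHat Y W with hs
  set s1 : ℝ := sigmaHat Y W₁ with hs1
  -- n * sigmaHat = SSE
  have hns : (n:ℝ) * s = Y ⬝ᵥ Y - Y ⬝ᵥ ((W * (Wᵀ * W)⁻¹ * Wᵀ) *ᵥ Y) := by
    rw [hs, sigmaHat, ← mul_assoc, mul_one_div, div_self (ne_of_gt hn0), one_mul]
  have hns1 : (n:ℝ) * s1 = Y ⬝ᵥ Y - Y ⬝ᵥ ((W₁ * (W₁ᵀ * W₁)⁻¹ * W₁ᵀ) *ᵥ Y) := by
    rw [hs1, sigmaHat, ← mul_assoc, mul_one_div, div_self (ne_of_gt hn0), one_mul]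
  -- Yt in residual form
  have hYt' : Yt = Y - W₁ *ᵥ ((W₁ᵀ * W₁)⁻¹ *ᵥ (W₁ᵀ *ᵥ Y)) := by
    rw [hYt, hPY]
  -- n*s1 = |Yt|²
  have hA2 : (n:ℝ) * s1 = Yt ⬝ᵥ Yt := by
    rw [hns1, ← sse_eq Y W₁ hW1, ← hYt']
  -- S γ₂ = Wt₂ᵀ Yt
  have hSγ : (Wt₂ᵀ * Wt₂) *ᵥ γ₂ = Wt₂ᵀ *ᵥ Yt := by
    rw [hγ₂]; exact hAe Yt Wt₂ hWt₂u
  -- residual identity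
  have hresid : (Yt - Wt₂ *ᵥ γ₂) ⬝ᵥ (Yt - Wt₂ *ᵥ γ₂) = Yt ⬝ᵥ Yt - t := by
    rw [sub_dotProduct, dotProduct_sub, dotProduct_sub,
      YdotW Yt Wt₂, ← hSγ, dotProduct_comm ((Wt₂ᵀ * Wt₂) *ᵥ γ₂) γ₂,
      dotProduct_comm (Wt₂ *ᵥ γ₂) Yt, YdotW Yt Wt₂, ← hSγ,
      dotProduct_comm ((Wt₂ᵀ * Wt₂) *ᵥ γ₂) γ₂, WdotW, ht]
    ring
  -- choose candidate coefficient vector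
  set a : Fin q → ℝ := (W₁ᵀ * W₁)⁻¹ *ᵥ (W₁ᵀ *ᵥ (Y - W₂ *ᵥ γ₂)) with ha
  set b : Fin q ⊕ Fin L → ℝ := Sum.elim a γ₂ with hb
  have hWb : W *ᵥ b = W₁ *ᵥ a + W₂ *ᵥ γ₂ := by
    rw [hW, hb, fromCols_mulVec_sumElim]
  have hres : Y - W *ᵥ b = Yt - Wt₂ *ᵥ γ₂ := by
    rw [hWb, hYt, hWt₂, ha, ← hPY (Y - W₂ *ᵥ γ₂) W₁, mulVec_sub, sub_mulVec,
      ← mulVec_mulVec (γ₂) (W₁ * (W₁ᵀ * W₁)⁻¹ * W₁ᵀ) W₂]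
    abel
  have hA1 : (n:ℝ) * s ≤ Yt ⬝ᵥ Yt - t := by
    rw [hns, ← hresid, ← hres]
    exact sse_le Y W hWtW b
  -- n*s1 ≤ Y⬝Y ≤ n*K
  have hA3 : (n:ℝ) * s1 ≤ (n:ℝ) * K := by
    have h1 := proj_nonneg Y W₁ hW1
    have h2 : Y ⬝ᵥ Y ≤ (n:ℝ) * K := by
      rw [div_mul_eq_mul_div, one_mul, div_le_iff₀ hn0] at hYK
      linarith [hYK]
    linarith [hns1, h1, h2]
  -- lower bound on t
  have hA4 : (n:ℝ) * ((m / L) * g) ≤ t := by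
    have := hlow γ₂
    rw [smul_mulVec, dotProduct_smul, smul_eq_mul] at this
    rw [← ht, ← hg] at this
    calc (n:ℝ) * ((m / L) * g) ≤ (n:ℝ) * ((1/(n:ℝ)) * t) :=
          mul_le_mul_of_nonneg_left this (le_of_lt hn0)
      _ = t := by field_simp
  have hgnn : 0 ≤ g := dp_self_nonneg γ₂
  clear_value g t s s1
  set δ : ℝ := (m / L) * g with hδ
  have hδnn : 0 ≤ δ := mul_nonneg (le_of_lt (div_pos hm hL0)) hgnn
  have hs1K : s1 ≤ K := le_of_mul_le_mul_left (by linarith) hn0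
  have hss1 : s ≤ s1 - δ := by
    have : (n:ℝ) * s ≤ (n:ℝ) * (s1 - δ) := by
      rw [mul_sub]; linarith [hA1, hA4]
    exact le_of_mul_le_mul_left this hn0
  have hsK : s ≤ K := by linarith
  -- ratio bound
  have hratio : 1 + δ / K ≤ s1 / s := by
    rw [le_div_iff₀ hσ]
    have : s * (δ / K) ≤ δ := by
      rw [mul_div_assoc']
      exact div_le_of_le_mul₀ (le_of_lt hK) hδnn (by nlinarith)
    nlinarith
  have h1pos : (0:ℝ) < 1 + δ / K := by positivity
  have hs1pos : (0:ℝ) < s1 := by linarith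
  have hlog : Real.log (1 + δ / K) ≤ Real.log s1 - Real.log s := by
    rw [← Real.log_div (ne_of_gt hs1pos) (ne_of_gt hσ)]
    exact Real.log_le_log h1pos hratio
  have heq : 1 + m * g / ((L:ℝ) * K) = 1 + δ / K := by
    rw [hδ]; field_simp
  rw [heq] at hsignal
  have : (n:ℝ) * Real.log (1 + δ / K) ≤ (n:ℝ) * (Real.log s1 - Real.log s) :=
    mul_le_mul_of_nonneg_left hlog (le_of_lt hn0)
  rw [mul_sub] at this
  linarith
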